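/- Let D be an integral domain that is not a field such that every maximal ideal M of D is invertible and ⋂_{n≥1} M^n = (0). Then D is a Dedekind domain. -/

import Mathlib

open scoped nonZeroDivisors

/-- **Cohen's theorem**: if every prime ideal of a commutative ring is finitely
generated, then the ring is Noetherian. -/
theorem cohen_aux {R : Type*} [CommRing R] (H : ∀ P : Ideal R, P.IsPrime → P.FG) :
    IsNoetherianRing R := by
  classical
  rw [isNoetherianRing_iff_ideal_fg]
  by_contra hcon
  push_neg at hcon
  obtain ⟨I₀, hI₀⟩ := hcon
  -- Zorn's lemma on the set of non-finitely-generated ideals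
  obtain ⟨P, -, hPmax⟩ := zorn_le_nonempty₀ {I : Ideal R | ¬ I.FG} (fun c hc hchain y hy => by
      refine ⟨sSup c, ?_, fun z hz => le_sSup hz⟩
      intro hfg
      replace hfg := (Submodule.fg_iff_compact _).mp hfg
      obtain ⟨x, hxc, hle⟩ := (CompleteLattice.isCompactElement_iff_le_of_directed_sSup_le
        (α := Ideal R) (sSup c)).mp hfg c ⟨y, hy⟩ hchain.directedOn le_rfl
      exact hc hxc ((Submodule.fg_iff_compact x).mpr
        (by rwa [le_antisymm hle (le_sSup hxc)] at hfg)) ) I₀ hI₀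
  have hPnfg : ¬ P.FG := hPmax.prop
  -- P is prime
  refine hPnfg (H P ?_)
  constructor
  · rintro rfl
    exact hPnfg ⟨{1}, by simp⟩
  · intro a b hab
    by_contra hcon2
    push_neg at hcon2
    obtain ⟨ha, hb⟩ := hcon2
    -- P + (a) is strictly bigger, hence f.g.
    have hPa : (P ⊔ Ideal.span {a}).FG := by
      by_contra hfg
      have heq := hPmax.eq_of_le (y := P ⊔ Ideal.span {a}) hfg le_sup_left
      apply ha
      rw [heq]
      exact Ideal.mem_sup_right (Ideal.subset_span rfl)
    -- the colon ideal (P : a) is strictly bigger, hence f.g.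
    set J : Ideal R := P.colon (Ideal.span {a}) with hJ
    have hPJ : P ≤ J := fun x hx =>
      Submodule.mem_colon.mpr fun p hp => by
        rw [smul_eq_mul]
        exact P.mul_mem_right _ hx
    have hbJ : b ∈ J := Submodule.mem_colon.mpr fun p hp => by
      rw [SetLike.mem_coe, Ideal.mem_span_singleton] at hp
      obtain ⟨c, rfl⟩ := hp
      rw [smul_eq_mul, show b * (a * c) = a * b * c by ring]
      exact P.mul_mem_right _ hab
    have hJfg : J.FG := by
      by_contra hfg
      have := hPmax.eq_of_le (y := J) hfg hPJ
      exact hb (this ▸ hbJ)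
    -- generators of P ⊔ (a)
    obtain ⟨s, hs⟩ := hPa
    -- each generator g = p_g + r_g * a with p_g ∈ P
    have hgen : ∀ g ∈ s, ∃ p r : R, p ∈ P ∧ g = p + r * a := by
      intro g hg
      have : g ∈ P ⊔ Ideal.span {a} := hs ▸ Ideal.subset_span hg
      rw [Submodule.mem_sup] at this
      obtain ⟨p, hp, q, hq, hpq⟩ := this
      rw [Ideal.mem_span_singleton] at hq
      obtain ⟨r, rfl⟩ := hq
      exact ⟨p, r, hp, by rw [← hpq]; ring⟩
    choose! pg rg hpg hgeq using hgen
    -- claim : P = span (pg '' s) ⊔ (a) * J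
    have key : P = Ideal.span (pg '' s) ⊔ Ideal.span {a} * J := by
      apply le_antisymm
      · intro x hx
        have hx' : x ∈ P ⊔ Ideal.span {a} := Ideal.mem_sup_left hx
        rw [← hs, Ideal.span, Submodule.mem_span_finset] at hx'
        obtain ⟨f, -, hf⟩ := hx'
        simp only [smul_eq_mul] at hf
        -- x = Σ f g • g = Σ f g (pg g + rg g * a)
        have hx2 : x = (∑ g ∈ s, f g * pg g) + (∑ g ∈ s, f g * rg g) * a := by
          rw [← hf, Finset.sum_mul]
          rw [← Finset.sum_add_distrib]
          apply Finset.sum_congr rfl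
          intro g hg
          nth_rw 2 [hgeq g hg]
          ring
        have h1 : (∑ g ∈ s, f g * pg g) ∈ Ideal.span (pg '' s) := by
          apply Ideal.sum_mem
          intro g hg
          exact Ideal.mul_mem_left _ _ (Ideal.subset_span ⟨g, hg, rfl⟩)
        have h2 : (∑ g ∈ s, f g * rg g) ∈ J := by
          rw [hJ]
          apply Submodule.mem_colon.mpr
          intro p hp
          rw [SetLike.mem_coe, Ideal.mem_span_singleton] at hp
          obtain ⟨c, rfl⟩ := hp
          rw [smul_eq_mul]
          have hxP : x - (∑ g ∈ s, f g * pg g) ∈ P := by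
            apply P.sub_mem hx
            exact Ideal.sum_mem _ fun g hg => P.mul_mem_left _ (hpg g hg)
          have : (∑ g ∈ s, f g * rg g) * a ∈ P := by
            have := hx2 ▸ hxP
            simpa using this
          rw [show (∑ g ∈ s, f g * rg g) * (a * c) = ((∑ g ∈ s, f g * rg g) * a) * c by ring]
          exact P.mul_mem_right _ this
        rw [hx2]
        apply Ideal.add_mem
        · exact Ideal.mem_sup_left h1
        · apply Ideal.mem_sup_right
          rw [mul_comm]
          exact Ideal.mul_mem_mul h2 (Ideal.subset_span (Set.mem_singleton a))
      · apply sup_le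
        · rw [Ideal.span_le]
          rintro _ ⟨g, hg, rfl⟩
          exact hpg g hg
        · rw [Ideal.mul_le]
          intro r hr q hq
          rw [Ideal.mem_span_singleton] at hr
          obtain ⟨c, rfl⟩ := hr
          have := Submodule.mem_colon.mp hq (a * c)
            (by rw [SetLike.mem_coe, Ideal.mem_span_singleton]; exact ⟨c, rfl⟩)
          rw [smul_eq_mul] at this
          rw [show a * c * q = q * (a * c) by ring]
          exact this
    -- hence P is f.g., contradiction
    apply hPnfg
    rw [key]
    apply Submodule.FG.sup
    · exact ⟨s.image pg, by simp [Finset.coe_image]⟩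
    · exact Submodule.FG.mul ⟨{a}, by simp⟩ hJfg

/-- Let `D` be an integral domain that is not a field such that every maximal ideal `M`
of `D` is invertible (`M M⁻¹ = D`) and `⋂_{n ≥ 1} M^n = (0)`. Then `D` is a Dedekind
domain. -/
theorem stmt_11 (D : Type*) [CommRing D] [IsDomain D] (hnf : ¬ IsField D)
    (h : ∀ M : Ideal D, M.IsMaximal →
      ((M : FractionalIdeal D⁰ (FractionRing D)) *
          (M : FractionalIdeal D⁰ (FractionRing D))⁻¹ = 1) ∧
        (⨅ (n : ℕ) (_ : 1 ≤ n), M ^ n) = ⊥) :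
    IsDedekindDomain D := by
  classical
  have inj : Function.Injective (algebraMap D (FractionRing D)) :=
    IsFractionRing.injective D (FractionRing D)
  -- Key lemma: a nonzero prime contained in a maximal ideal equals it
  have key : ∀ P : Ideal D, P.IsPrime → P ≠ ⊥ → ∀ M : Ideal D, M.IsMaximal →
      P ≤ M → P = M := by
    intro P hP hPne M hM hPM
    obtain ⟨hMinv, hMinf⟩ := h M hM
    have hle : (P : FractionalIdeal D⁰ (FractionRing D)) *
        (M : FractionalIdeal D⁰ (FractionRing D))⁻¹ ≤ 1 := by
      calc (P : FractionalIdeal D⁰ (FractionRing D)) *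
            (M : FractionalIdeal D⁰ (FractionRing D))⁻¹
          ≤ (M : FractionalIdeal D⁰ (FractionRing D)) *
            (M : FractionalIdeal D⁰ (FractionRing D))⁻¹ :=
            mul_left_mono
              (FractionalIdeal.coeIdeal_le_coeIdeal _ |>.mpr hPM)
        _ = 1 := hMinv
    obtain ⟨J, hJ⟩ := FractionalIdeal.le_one_iff_exists_coeIdeal.mp hle
    have hJM : J * M = P := by
      apply FractionalIdeal.coeIdeal_injective (K := FractionRing D)
      push_cast
      rw [hJ, mul_assoc, mul_comm
        ((M : FractionalIdeal D⁰ (FractionRing D)))⁻¹, hMinv, mul_one]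
    rcases hP.mul_le.mp hJM.le with hJP | hMP
    · -- J ≤ P forces P ≤ ⋂ M^n = ⊥, contradiction
      exfalso
      apply hPne
      have hstep : P ≤ P * M := by
        conv_lhs => rw [← hJM]
        exact Ideal.mul_mono_left hJP
      have hpow : ∀ n : ℕ, P ≤ M ^ (n + 1) := by
        intro n
        induction n with
        | zero => simpa using hPM
        | succ k ih =>
          calc P ≤ P * M := hstep
            _ ≤ M ^ (k + 1) * M := Ideal.mul_mono_left ih
            _ = M ^ (k + 2) := (pow_succ M (k + 1)).symm
      rw [← le_bot_iff, ← hMinf]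
      refine le_iInf fun n => le_iInf fun hn => ?_
      obtain ⟨m, rfl⟩ := Nat.exists_eq_add_of_le hn
      simpa [Nat.add_comm] using hpow m
    · exact le_antisymm hPM hMP
  -- every prime ideal is finitely generated
  have hprime_fg : ∀ P : Ideal D, P.IsPrime → P.FG := by
    intro P hP
    by_cases hPb : P = ⊥
    · exact ⟨∅, by simp [hPb]⟩
    · obtain ⟨M, hM, hPM⟩ := Ideal.exists_le_maximal P hP.ne_top
      have hPe := key P hP hPb M hM hPM
      subst hPe
      exact Ideal.fg_of_isUnit inj P
        ((FractionalIdeal.mul_inv_cancel_iff_isUnit (FractionRing D)).mp (h P hM).1)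
  haveI hnoeth : IsNoetherianRing D := cohen_aux hprime_fg
  -- every nonzero integral ideal is invertible
  have hidl : ∀ I : Ideal D, I ≠ ⊥ → IsUnit (I : FractionalIdeal D⁰ (FractionRing D)) := by
    by_contra hcon
    push_neg at hcon
    obtain ⟨I₀, hI₀ne, hI₀⟩ := hcon
    obtain ⟨I, hIS, hImax⟩ := (IsWellFounded.wf (α := Ideal D) (r := (· > ·))).has_min
      {I : Ideal D | I ≠ ⊥ ∧ ¬ IsUnit (I : FractionalIdeal D⁰ (FractionRing D))}
      ⟨I₀, hI₀ne, hI₀⟩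
    obtain ⟨hIne, hIu⟩ := hIS
    have hItop : I ≠ ⊤ := by
      rintro rfl
      exact hIu (by rw [FractionalIdeal.coeIdeal_top]; exact isUnit_one)
    obtain ⟨M, hM, hIM⟩ := Ideal.exists_le_maximal I hItop
    obtain ⟨hMinv, hMinf⟩ := h M hM
    have hle : (I : FractionalIdeal D⁰ (FractionRing D)) *
        (M : FractionalIdeal D⁰ (FractionRing D))⁻¹ ≤ 1 := by
      calc (I : FractionalIdeal D⁰ (FractionRing D)) *
            (M : FractionalIdeal D⁰ (FractionRing D))⁻¹
          ≤ (M : FractionalIdeal D⁰ (FractionRing D)) *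
            (M : FractionalIdeal D⁰ (FractionRing D))⁻¹ :=
            mul_left_mono
              (FractionalIdeal.coeIdeal_le_coeIdeal _ |>.mpr hIM)
        _ = 1 := hMinv
    obtain ⟨J, hJ⟩ := FractionalIdeal.le_one_iff_exists_coeIdeal.mp hle
    have hJM : J * M = I := by
      apply FractionalIdeal.coeIdeal_injective (K := FractionRing D)
      push_cast
      rw [hJ, mul_assoc, mul_comm
        ((M : FractionalIdeal D⁰ (FractionRing D)))⁻¹, hMinv, mul_one]
    have hIJ : I ≤ J := by
      rw [← FractionalIdeal.coeIdeal_le_coeIdeal (FractionRing D), hJ]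
      have h1M : 1 ≤ (M : FractionalIdeal D⁰ (FractionRing D))⁻¹ := by
        calc (1 : FractionalIdeal D⁰ (FractionRing D))
            = (M : FractionalIdeal D⁰ (FractionRing D)) *
              (M : FractionalIdeal D⁰ (FractionRing D))⁻¹ := hMinv.symm
          _ ≤ 1 * (M : FractionalIdeal D⁰ (FractionRing D))⁻¹ :=
              mul_left_mono FractionalIdeal.coeIdeal_le_one
          _ = (M : FractionalIdeal D⁰ (FractionRing D))⁻¹ := one_mul _
      calc (I : FractionalIdeal D⁰ (FractionRing D))
          = (I : FractionalIdeal D⁰ (FractionRing D)) * 1 := (mul_one _).symm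
        _ ≤ (I : FractionalIdeal D⁰ (FractionRing D)) *
            (M : FractionalIdeal D⁰ (FractionRing D))⁻¹ :=
              mul_right_mono h1M
    by_cases hIJeq : I = J
    · -- then I * M = I, so I ≤ ⋂ M^n = ⊥, contradiction
      apply hIne
      have hIMI : I * M = I := by rw [← hIJeq] at hJM; exact hJM
      have hpow : ∀ n : ℕ, I ≤ M ^ (n + 1) := by
        intro n
        induction n with
        | zero => simpa using hIM
        | succ k ih =>
          calc I = I * M := hIMI.symm
            _ ≤ M ^ (k + 1) * M := Ideal.mul_mono_left ih
            _ = M ^ (k + 2) := (pow_succ M (k + 1)).symm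
      rw [← le_bot_iff, ← hMinf]
      refine le_iInf fun n => le_iInf fun hn => ?_
      obtain ⟨m, rfl⟩ := Nat.exists_eq_add_of_le hn
      simpa [Nat.add_comm] using hpow m
    · -- J is strictly bigger, hence a unit; so I = J * M is a unit
      have hJgt : J > I := lt_of_le_of_ne hIJ hIJeq
      have hJS := hImax J
      have hJne : J ≠ ⊥ := fun hb => hIne (le_bot_iff.mp (hb ▸ hIJ))
      have hJu : IsUnit (J : FractionalIdeal D⁰ (FractionRing D)) := by
        by_contra hJu
        exact hJS ⟨hJne, hJu⟩ hJgt
      apply hIu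
      rw [← hJM, FractionalIdeal.coeIdeal_mul]
      exact hJu.mul ((FractionalIdeal.mul_inv_cancel_iff_isUnit (FractionRing D)).mp hMinv)
  -- conclude: D satisfies IsDedekindDomainInv
  have hinv : ∀ I ≠ (⊥ : FractionalIdeal D⁰ (FractionRing D)), I * I⁻¹ = 1 := by
    intro I hI
    rw [FractionalIdeal.mul_inv_cancel_iff_isUnit (FractionRing D)]
    obtain ⟨a, J, ha, hIJ⟩ := FractionalIdeal.exists_eq_spanSingleton_mul I
    have hJne : J ≠ ⊥ := by
      rintro rfl
      apply hI
      rw [hIJ]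
      simp
    have hx : algebraMap D (FractionRing D) a ≠ 0 := fun hz =>
      ha (inj (by rw [hz, map_zero]))
    have hspan : IsUnit (FractionalIdeal.spanSingleton D⁰
        ((algebraMap D (FractionRing D)) a)⁻¹) := by
      refine isUnit_iff_exists_inv.mpr ⟨FractionalIdeal.spanSingleton D⁰
        ((algebraMap D (FractionRing D)) a), ?_⟩
      rw [FractionalIdeal.spanSingleton_mul_spanSingleton, inv_mul_cancel₀ hx,
        FractionalIdeal.spanSingleton_one]
    rw [hIJ]
    exact hspan.mul (hidl J hJne)
  exact isDedekindDomain_iff_mul_inv_cancel.mpr hinv
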